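/- For t stacks in series, every permutation that is sorted by the right-greedy algorithm is also sorted by the left-greedy algorithm. -/

import Mathlib

/-- A configuration for sorting with `t` stacks in series: the remaining input,
the stacks (index `0` is the leftmost, next to the output; index `t-1` is the
rightmost, next to the input; the head of each list is the top of the stack),
and the output produced so far. -/
structure Conf where
  input : List ℕ
  stks : List (List ℕ)
  output : List ℕ
deriving DecidableEq, Repr

/-- `x` may be placed on top of a stack iff the stack is empty or `x` is smaller
than the current top (stacks are increasing from top to bottom). -/
def canPush (x : ℕ) : List ℕ → Bool
  | [] => true
  | y :: _ => decide (x < y)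

/-- Moves, ordered left to right: `0` = pop the leftmost stack to the output
(legal only for the next element of the identity); `m` with `0 < m < t` = move the
top of stack `m` one stack to the left; `t` = push the next input element onto the
rightmost stack. -/
def legal (t : ℕ) (c : Conf) (m : ℕ) : Bool :=
  if m = 0 then
    match c.stks.getD 0 [] with
    | x :: _ => x == c.output.length + 1
    | [] => false
  else if m < t then
    match c.stks.getD m [] with
    | x :: _ => canPush x (c.stks.getD (m-1) [])
    | [] => false
  else if m = t then
    match c.input with
    | x :: _ => canPush x (c.stks.getD (t-1) [])
    | [] => false
  else false

/-- Perform move `m` on configuration `c` (with `t` stacks). -/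
def applyMove (t : ℕ) (c : Conf) (m : ℕ) : Conf :=
  if m = 0 then
    match c.stks.getD 0 [] with
    | x :: s => ⟨c.input, c.stks.set 0 s, c.output ++ [x]⟩
    | [] => c
  else if m < t then
    match c.stks.getD m [] with
    | x :: s => ⟨c.input, (c.stks.set m s).set (m-1) (x :: c.stks.getD (m-1) []), c.output⟩
    | [] => c
  else
    match c.input with
    | x :: rest => ⟨rest, c.stks.set (t-1) (x :: c.stks.getD (t-1) []), c.output⟩
    | [] => c

def initConf (t : ℕ) (p : List ℕ) : Conf := ⟨p, List.replicate t [], []⟩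

/-- The fully sorted configuration: empty input and stacks, output `1,2,...,n`. -/
def finalConf (t n : ℕ) : Conf := ⟨[], List.replicate t [], List.range' 1 n⟩

/-- Run a sequence of moves, requiring each to be legal. -/
def runLegal (t : ℕ) : Conf → List ℕ → Option Conf
  | c, [] => some c
  | c, m :: ms => if legal t c m then runLegal t (applyMove t c m) ms else none

/-- `p` is sortable by `t` stacks in series by some sequence of legal moves. -/
def Sortable (t : ℕ) (p : List ℕ) : Prop :=
  ∃ ms : List ℕ, runLegal t (initConf t p) ms = some (finalConf t p.length)

/-- The leftmost legal move, if any. -/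
def leftMove (t : ℕ) (c : Conf) : Option ℕ :=
  ((List.range (t+1)).filter (fun m => legal t c m)).head?

/-- The rightmost legal move, if any. -/
def rightMove (t : ℕ) (c : Conf) : Option ℕ :=
  ((List.range (t+1)).filter (fun m => legal t c m)).getLast?

/-- One step of a greedy algorithm given by the move selector `mv`
(the configuration is unchanged if no move is legal, i.e. the algorithm fails or is done). -/
def greedyStep (mv : ℕ → Conf → Option ℕ) (t : ℕ) (c : Conf) : Conf :=
  match mv t c with
  | some m => applyMove t c m
  | none => c

/-- The greedy algorithm given by `mv` sorts `p` with `t` stacks in series. -/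
def GreedySorts (mv : ℕ → Conf → Option ℕ) (t : ℕ) (p : List ℕ) : Prop :=
  ∃ k : ℕ, (greedyStep mv t)^[k] (initConf t p) = finalConf t p.length

def LeftGreedySorts : ℕ → List ℕ → Prop := GreedySorts leftMove
def RightGreedySorts : ℕ → List ℕ → Prop := GreedySorts rightMove

/-- `p` is a permutation of `1,...,n` (as a list). -/
def IsPermOf (n : ℕ) (p : List ℕ) : Prop := p.Perm (List.range' 1 n)

/-- The position of the element `x` in configuration `c`: `0` if in the output
(furthest left), `j+1` if in stack `j`, `t+1` if still in the input (furthest right). -/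
def posOf (t : ℕ) (c : Conf) (x : ℕ) : ℕ :=
  if x ∈ c.output then 0
  else match (List.range t).find? (fun j => decide (x ∈ c.stks.getD j [])) with
    | some j => j + 1
    | none => t + 1

/-- `c` is at the `i`-th critical moment for the greedy algorithm `mv` on a
permutation of length `n`: either the chosen move is the entry of the `i`-th
element into the stacks, or the algorithm fails (no legal move, incomplete output). -/
def IsCrit (mv : ℕ → Conf → Option ℕ) (t i n : ℕ) (c : Conf) : Prop :=
  (c.input.length + i = n + 1 ∧ mv t c = some t) ∨
  (mv t c = none ∧ c.output.length < n)

/-- `c` is the configuration at the `i`-th critical moment of the greedy algorithm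
`mv` run on `p` (the first moment along the run satisfying `IsCrit`). -/
def CritConf (mv : ℕ → Conf → Option ℕ) (t i n : ℕ) (p : List ℕ) (c : Conf) : Prop :=
  ∃ k : ℕ, (greedyStep mv t)^[k] (initConf t p) = c ∧ IsCrit mv t i n c ∧
    ∀ k' < k, ¬ IsCrit mv t i n ((greedyStep mv t)^[k'] (initConf t p))

/-- No stack is empty while some stack to its right is nonempty. -/
def NoGap (t : ℕ) (c : Conf) : Prop :=
  ∀ j j' : ℕ, j < j' → j' < t → c.stks.getD j' [] ≠ [] → c.stks.getD j [] ≠ []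

/-- `r` contains `q` as a pattern. -/
def ContainsPat (r q : List ℕ) : Prop :=
  ∃ f : Fin q.length → Fin r.length, StrictMono f ∧
    ∀ a b : Fin q.length, q.get a < q.get b ↔ r.get (f a) < r.get (f b)

/-! ### Auxiliary development -/

namespace StacksAux

/-- The `j`-th stack of a configuration. -/
def S (c : Conf) (j : ℕ) : List ℕ := c.stks.getD j []

/-- `x` is in the output or in a stack of index `< j` ("position at most j"). -/
def Below (c : Conf) (j x : ℕ) : Prop := x ∈ c.output ∨ ∃ j' < j, x ∈ S c j'

/-- A valid configuration. -/
structure Valid (t n : ℕ) (c : Conf) : Prop where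
  len : c.stks.length = t
  out : c.output = List.range' 1 c.output.length
  sorted : ∀ j, (S c j).Chain' (· < ·)
  perm : (c.output ++ c.stks.flatten ++ c.input).Perm (List.range' 1 n)

/-- No non-push move is legal. -/
def StableL (t : ℕ) (c : Conf) : Prop := ∀ m, m < t → legal t c m = false

/-- The coupling invariant between the left-greedy configuration `cl` and the
right-greedy configuration `cr`. -/
structure Inv (t n : ℕ) (cl cr : Conf) : Prop where
  vl : Valid t n cl
  vr : Valid t n cr
  inp : cl.input = cr.input
  stab : StableL t cl
  pos : ∀ j x, Below cr j x → Below cl j x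

/-! #### plumbing -/

lemma getD_set_self (L : List (List ℕ)) (i : ℕ) (s : List ℕ) (h : i < L.length) :
    (L.set i s).getD i [] = s := by
  rw [List.getD_eq_getElem?_getD, List.getElem?_set_self (by simpa using h)]; rfl

lemma getD_set_ne (L : List (List ℕ)) {i j : ℕ} (s : List ℕ) (h : i ≠ j) :
    (L.set i s).getD j [] = L.getD j [] := by
  rw [List.getD_eq_getElem?_getD, List.getElem?_set_ne h, ← List.getD_eq_getElem?_getD]

lemma S_eq (c : Conf) (j : ℕ) (h : j < c.stks.length) : S c j = c.stks[j] := by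
  rw [S, List.getD_eq_getElem?_getD, List.getElem?_eq_getElem h]; rfl

lemma S_default (c : Conf) (j : ℕ) (h : c.stks.length ≤ j) : S c j = [] := by
  rw [S, List.getD_eq_getElem?_getD, List.getElem?_eq_none h]; rfl

lemma flatten_set_perm (L : List (List ℕ)) (i : ℕ) (s : List ℕ) (h : i < L.length) :
    ((L.set i s).flatten ++ L[i]).Perm (L.flatten ++ s) := by
  induction L generalizing i with
  | nil => simp at h
  | cons a as ih =>
    cases i with
    | zero =>
      refine List.perm_iff_count.2 fun y => ?_
      simp only [List.set_cons_zero, List.flatten_cons, List.getElem_cons_zero,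
        List.count_append]
      omega
    | succ i =>
      have := (ih i (by simpa using h)).count_eq
      refine List.perm_iff_count.2 fun y => ?_
      have h2 := this y
      simp only [List.count_append] at h2 ⊢
      simp only [List.set_cons_succ, List.flatten_cons, List.getElem_cons_succ,
        List.count_append]
      omega

lemma below_mono {c : Conf} {j j' x : ℕ} (h : j ≤ j') : Below c j x → Below c j' x := by
  rintro (h1 | ⟨i, hi, hx⟩)
  · exact Or.inl h1
  · exact Or.inr ⟨i, lt_of_lt_of_le hi h, hx⟩

/-! #### characterizations of `legal` and `applyMove` -/

lemma canPush_iff {x : ℕ} {l : List ℕ} : canPush x l = true ↔ ∀ y ∈ l.head?, x < y := by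
  cases l <;> simp [canPush]

lemma legal0_iff {t : ℕ} {c : Conf} :
    legal t c 0 = true ↔ ∃ s, S c 0 = (c.output.length + 1) :: s := by
  unfold S
  rw [legal, if_pos rfl]
  cases hS : c.stks.getD 0 [] with
  | nil => simp
  | cons a l => simp [beq_iff_eq]

lemma legalm_iff {t m : ℕ} {c : Conf} (h0 : 0 < m) (ht : m < t) :
    legal t c m = true ↔ ∃ x s, S c m = x :: s ∧ canPush x (S c (m-1)) = true := by
  unfold S
  rw [legal, if_neg (by omega), if_pos ht]
  cases hS : c.stks.getD m [] with
  | nil => simp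
  | cons a l => simp

lemma legalt_iff {t : ℕ} {c : Conf} (ht : 0 < t) :
    legal t c t = true ↔ ∃ x r, c.input = x :: r ∧ canPush x (S c (t-1)) = true := by
  unfold S
  rw [legal, if_neg (by omega), if_neg (by omega), if_pos rfl]
  cases hI : c.input with
  | nil => simp
  | cons a l => simp

lemma apply0_eq {t : ℕ} {c : Conf} {x : ℕ} {s : List ℕ} (hS : S c 0 = x :: s) :
    applyMove t c 0 = ⟨c.input, c.stks.set 0 s, c.output ++ [x]⟩ := by
  rw [S] at hS
  rw [applyMove, if_pos rfl, hS]

lemma applym_eq {t m : ℕ} {c : Conf} {x : ℕ} {s : List ℕ} (h0 : 0 < m) (ht : m < t)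
    (hS : S c m = x :: s) :
    applyMove t c m = ⟨c.input, (c.stks.set m s).set (m-1) (x :: S c (m-1)), c.output⟩ := by
  rw [S] at hS
  rw [applyMove, if_neg (by omega), if_pos ht, hS]
  rfl

lemma applyt_eq {t : ℕ} {c : Conf} {x : ℕ} {r : List ℕ} (ht : 0 < t) (hI : c.input = x :: r) :
    applyMove t c t = ⟨r, c.stks.set (t-1) (x :: S c (t-1)), c.output⟩ := by
  rw [applyMove, if_neg (by omega), if_neg (by omega), hI]
  rfl

/-! #### consequences of validity -/

namespace Valid

set_option linter.unusedSectionVars false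

variable {t n : ℕ} {c : Conf} (v : Valid t n c)

include v

lemma stack_pos (j : ℕ) (h : S c j ≠ []) : j < t := by
  by_contra hh
  exact h (S_default c j (by rw [v.len]; omega))

lemma mem_flatten_iff {x : ℕ} : x ∈ c.stks.flatten ↔ ∃ j, x ∈ S c j := by
  rw [List.mem_flatten]
  constructor
  · rintro ⟨l, hl, hx⟩
    obtain ⟨j, hj, rfl⟩ := List.mem_iff_getElem.1 hl
    exact ⟨j, by rw [S_eq c j hj]; exact hx⟩
  · rintro ⟨j, hx⟩
    have hj : j < c.stks.length := by
      by_contra hh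
      rw [S_default c j (by omega)] at hx
      simp at hx
    exact ⟨c.stks[j], List.getElem_mem hj, by rwa [← S_eq c j hj]⟩

lemma nodup : (c.output ++ c.stks.flatten ++ c.input).Nodup :=
  v.perm.nodup_iff.2 (List.nodup_range' (s := 1) (n := n) 1 (by norm_num))

lemma u_out_stk {x j : ℕ} (h1 : x ∈ c.output) (h2 : x ∈ S c j) : False := by
  have nd := v.nodup
  rw [List.append_assoc, List.nodup_append] at nd
  exact nd.2.2 _ h1 _ (List.mem_append_left _ ((v.mem_flatten_iff).2 ⟨j, h2⟩)) rfl

lemma u_out_inp {x : ℕ} (h1 : x ∈ c.output) (h2 : x ∈ c.input) : False := by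
  have nd := v.nodup
  rw [List.append_assoc, List.nodup_append] at nd
  exact nd.2.2 _ h1 _ (List.mem_append_right _ h2) rfl

lemma u_stk_inp {x j : ℕ} (h1 : x ∈ S c j) (h2 : x ∈ c.input) : False := by
  have nd := v.nodup
  rw [List.nodup_append] at nd
  exact nd.2.2 _ (List.mem_append_right _ ((v.mem_flatten_iff).2 ⟨j, h1⟩)) _ h2 rfl

lemma u_stk_stk {x j j' : ℕ} (hne : j ≠ j') (h1 : x ∈ S c j) (h2 : x ∈ S c j') : False := by
  have nd := v.nodup
  rw [List.nodup_append, List.nodup_append] at nd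
  have hfl : c.stks.flatten.Nodup := nd.1.2.1
  rw [List.nodup_flatten] at hfl
  have hj : j < c.stks.length := v.len ▸ v.stack_pos j (by rintro h; rw [h] at h1; simp at h1)
  have hj' : j' < c.stks.length := v.len ▸ v.stack_pos j' (by rintro h; rw [h] at h2; simp at h2)
  rw [S_eq c j hj] at h1; rw [S_eq c j' hj'] at h2
  rcases Nat.lt_or_ge j j' with hlt | hge
  · exact (List.pairwise_iff_getElem.1 hfl.2) j j' hj hj' hlt h1 h2
  · exact (List.pairwise_iff_getElem.1 hfl.2) j' j hj' hj (by omega) h2 h1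

lemma mem_range'_of_mem_out {x : ℕ} (h : x ∈ c.output) : x ∈ List.range' 1 n :=
  v.perm.subset (List.mem_append_left _ (List.mem_append_left _ h))

lemma mem_range'_of_mem_stk {x j : ℕ} (h : x ∈ S c j) : x ∈ List.range' 1 n :=
  v.perm.subset (List.mem_append_left _ (List.mem_append_right _ ((v.mem_flatten_iff).2 ⟨j, h⟩)))

lemma total {x : ℕ} (h : x ∈ List.range' 1 n) :
    x ∈ c.output ∨ (∃ j, x ∈ S c j) ∨ x ∈ c.input := by
  have := v.perm.symm.subset h
  rcases List.mem_append.1 this with h1 | h2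
  · rcases List.mem_append.1 h1 with h3 | h4
    · exact Or.inl h3
    · exact Or.inr (Or.inl ((v.mem_flatten_iff).1 h4))
  · exact Or.inr (Or.inr h2)

lemma not_below_of_mem_stack {x j : ℕ} (h : x ∈ S c j) : ¬ Below c j x := by
  rintro (h1 | ⟨j', hj', hx⟩)
  · exact v.u_out_stk h1 h
  · exact v.u_stk_stk (by omega) hx h

lemma mem_out_iff {x : ℕ} : x ∈ c.output ↔ 1 ≤ x ∧ x < c.output.length + 1 := by
  conv_lhs => rw [v.out]
  rw [List.mem_range'_1]
  omega

/-- elements in stacks are bigger than everything in the output -/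
lemma out_lt_stk {x j : ℕ} (h : x ∈ S c j) : c.output.length < x := by
  by_contra hh
  have h1 : 1 ≤ x := by
    have := v.mem_range'_of_mem_stk h
    rw [List.mem_range'_1] at this
    omega
  exact v.u_out_stk (v.mem_out_iff.2 ⟨h1, by omega⟩) h

/-- the head of a sorted stack is a lower bound -/
lemma head_le_of_mem {x y j : ℕ} {l : List ℕ} (hS : S c j = y :: l) (h : x ∈ S c j) : y ≤ x := by
  have hs := v.sorted j
  rw [hS] at hs h
  replace hs := List.isChain_iff_pairwise.1 hs
  rcases List.mem_cons.1 h with rfl | h2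
  · exact le_refl _
  · exact le_of_lt (List.rel_of_pairwise_cons hs h2)

end Valid

/-! #### effect of the moves -/

section Moves

variable {t n : ℕ} {c : Conf}

lemma pop_pack (v : Valid t n c) (hl : legal t c 0 = true) :
    ∃ x s, S c 0 = x :: s ∧ x = c.output.length + 1 ∧
      (applyMove t c 0).input = c.input ∧
      (applyMove t c 0).output = c.output ++ [x] ∧
      S (applyMove t c 0) 0 = s ∧ (∀ j, j ≠ 0 → S (applyMove t c 0) j = S c j) ∧
      Valid t n (applyMove t c 0) ∧
      (∀ j y, Below (applyMove t c 0) j y ↔ Below c j y ∨ y = x) := by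
  obtain ⟨s, hS⟩ := legal0_iff.1 hl
  have ht0 : (0:ℕ) < t := v.stack_pos 0 (by rw [hS]; simp)
  have h0 : 0 < c.stks.length := by rw [v.len]; exact ht0
  have hA := apply0_eq (t := t) hS
  have ei : (applyMove t c 0).input = c.input := by rw [hA]
  have eo : (applyMove t c 0).output = c.output ++ [c.output.length + 1] := by rw [hA]
  have e0 : S (applyMove t c 0) 0 = s := by
    rw [hA]; exact getD_set_self _ _ _ h0
  have ej : ∀ j, j ≠ 0 → S (applyMove t c 0) j = S c j := by
    intro j hj
    rw [hA]; exact getD_set_ne _ _ (fun h => hj h.symm)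
  have hst0 : c.stks[0]'h0 = (c.output.length + 1) :: s := by
    rw [← S_eq c 0 h0]; exact hS
  have hv : Valid t n (applyMove t c 0) := by
    refine ⟨?_, ?_, ?_, ?_⟩
    · rw [hA]; simpa [List.length_set] using v.len
    · rw [eo]
      have hlen : (c.output ++ [c.output.length + 1]).length = c.output.length + 1 := by simp
      rw [hlen, List.range'_concat]
      have : 1 + 1 * c.output.length = c.output.length + 1 := by omega
      rw [this]
      congr 1
      exact v.out
    · intro j
      rcases eq_or_ne j 0 with rfl | hj
      · rw [e0]
        have := v.sorted 0
        rw [hS] at this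
        exact this.tail
      · rw [ej j hj]; exact v.sorted j
    · rw [hA]
      refine List.perm_iff_count.2 fun y => ?_
      have h1 := (flatten_set_perm c.stks 0 s h0).count_eq y
      have h2 := v.perm.count_eq y
      rw [hst0] at h1
      rcases eq_or_ne y (c.output.length + 1) with rfl | hxy
      · simp only [List.count_append, List.count_cons, List.count_nil, if_pos rfl] at h1 h2 ⊢
        omega
      · simp only [List.count_append, List.count_cons, List.count_nil, if_neg hxy] at h1 h2 ⊢
        omega
  refine ⟨c.output.length + 1, s, hS, rfl, ei, eo, e0, ej, hv, fun j y => ?_⟩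
  constructor
  · rintro (hy | ⟨j', hj', hy⟩)
    · rw [eo] at hy
      rcases List.mem_append.1 hy with h | h
      · exact Or.inl (Or.inl h)
      · exact Or.inr (by simpa using h)
    · rcases eq_or_ne j' 0 with rfl | hne
      · rw [e0] at hy
        exact Or.inl (Or.inr ⟨0, hj', by rw [hS]; exact List.mem_cons_of_mem _ hy⟩)
      · rw [ej j' hne] at hy
        exact Or.inl (Or.inr ⟨j', hj', hy⟩)
  · rintro ((hy | ⟨j', hj', hy⟩) | rfl)
    · exact Or.inl (by rw [eo]; exact List.mem_append_left _ hy)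
    · rcases eq_or_ne j' 0 with rfl | hne
      · rw [hS] at hy
        rcases List.mem_cons.1 hy with rfl | hy
        · exact Or.inl (by rw [eo]; exact List.mem_append_right _ (by simp))
        · exact Or.inr ⟨0, hj', by rw [e0]; exact hy⟩
      · exact Or.inr ⟨j', hj', by rw [ej j' hne]; exact hy⟩
    · exact Or.inl (by rw [eo]; exact List.mem_append_right _ (by simp))

lemma mid_pack {m : ℕ} (v : Valid t n c) (h0 : 0 < m) (htm : m < t) (hl : legal t c m = true) :
    ∃ x s, S c m = x :: s ∧ canPush x (S c (m-1)) = true ∧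
      (applyMove t c m).input = c.input ∧
      (applyMove t c m).output = c.output ∧
      S (applyMove t c m) (m-1) = x :: S c (m-1) ∧ S (applyMove t c m) m = s ∧
      (∀ j, j ≠ m-1 → j ≠ m → S (applyMove t c m) j = S c j) ∧
      Valid t n (applyMove t c m) ∧
      (∀ j y, Below (applyMove t c m) j y ↔ Below c j y ∨ (y = x ∧ m ≤ j)) := by
  obtain ⟨x, s, hS, hcp⟩ := (legalm_iff h0 htm).1 hl
  have hmlen : m < c.stks.length := by rw [v.len]; exact htm
  have hm1len : m - 1 < (c.stks.set m s).length := by rw [List.length_set, v.len]; omega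
  have hm1len' : m - 1 < c.stks.length := by rw [v.len]; omega
  have hA := applym_eq h0 htm hS
  have ei : (applyMove t c m).input = c.input := by rw [hA]
  have eo : (applyMove t c m).output = c.output := by rw [hA]
  have em1 : S (applyMove t c m) (m-1) = x :: S c (m-1) := by
    rw [hA]
    exact getD_set_self _ _ _ hm1len
  have em : S (applyMove t c m) m = s := by
    rw [hA]
    show ((c.stks.set m s).set (m-1) (x :: S c (m-1))).getD m [] = s
    rw [getD_set_ne _ _ (by omega : m - 1 ≠ m)]
    exact getD_set_self _ _ _ hmlen
  have ej : ∀ j, j ≠ m-1 → j ≠ m → S (applyMove t c m) j = S c j := by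
    intro j hj1 hj2
    rw [hA]
    show ((c.stks.set m s).set (m-1) (x :: S c (m-1))).getD j [] = _
    rw [getD_set_ne _ _ (fun h => hj1 h.symm), getD_set_ne _ _ (fun h => hj2 h.symm)]
    rfl
  have hstm : c.stks[m]'hmlen = x :: s := by rw [← S_eq c m hmlen]; exact hS
  have hstm1 : (c.stks.set m s)[m-1]'hm1len = S c (m-1) := by
    rw [List.getElem_set_ne (by omega : m ≠ m - 1), ← S_eq c (m-1) hm1len']
  have hv : Valid t n (applyMove t c m) := by
    refine ⟨?_, ?_, ?_, ?_⟩
    · rw [hA]; simpa [List.length_set] using v.len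
    · rw [eo]; exact v.out
    · intro j
      rcases eq_or_ne j (m-1) with rfl | hj1
      · rw [em1]; show List.IsChain _ _; rw [List.isChain_cons]
        exact ⟨canPush_iff.1 hcp, v.sorted (m-1)⟩
      rcases eq_or_ne j m with rfl | hj2
      · rw [em]
        have h2 := v.sorted j
        rw [hS] at h2
        exact h2.tail
      · rw [ej j hj1 hj2]; exact v.sorted j
    · rw [hA]
      refine List.perm_iff_count.2 fun y => ?_
      have h1 := (flatten_set_perm c.stks m s hmlen).count_eq y
      have h2 := (flatten_set_perm (c.stks.set m s) (m-1) (x :: S c (m-1)) hm1len).count_eq y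
      have h3 := v.perm.count_eq y
      rw [hstm] at h1
      rw [hstm1] at h2
      rcases eq_or_ne y x with rfl | hxy
      · simp only [List.count_append, List.count_cons, List.count_nil, if_pos rfl] at h1 h2 h3 ⊢
        omega
      · simp only [List.count_append, List.count_cons, List.count_nil, if_neg hxy] at h1 h2 h3 ⊢
        omega
  refine ⟨x, s, hS, hcp, ei, eo, em1, em, ej, hv, fun j y => ?_⟩
  constructor
  · rintro (hy | ⟨j', hj', hy⟩)
    · rw [eo] at hy; exact Or.inl (Or.inl hy)
    · rcases eq_or_ne j' (m-1) with rfl | hj1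
      · rw [em1] at hy
        rcases List.mem_cons.1 hy with rfl | hy
        · exact Or.inr ⟨rfl, by omega⟩
        · exact Or.inl (Or.inr ⟨m-1, hj', hy⟩)
      rcases eq_or_ne j' m with rfl | hj2
      · rw [em] at hy
        exact Or.inl (Or.inr ⟨j', hj', by rw [hS]; exact List.mem_cons_of_mem _ hy⟩)
      · rw [ej j' hj1 hj2] at hy
        exact Or.inl (Or.inr ⟨j', hj', hy⟩)
  · rintro ((hy | ⟨j', hj', hy⟩) | ⟨rfl, hmj⟩)
    · exact Or.inl (by rw [eo]; exact hy)
    · rcases eq_or_ne j' (m-1) with rfl | hj1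
      · exact Or.inr ⟨m-1, hj', by rw [em1]; exact List.mem_cons_of_mem _ hy⟩
      rcases eq_or_ne j' m with rfl | hj2
      · rw [hS] at hy
        rcases List.mem_cons.1 hy with rfl | hy
        · exact Or.inr ⟨j'-1, by omega, by rw [em1]; exact List.mem_cons_self⟩
        · exact Or.inr ⟨j', hj', by rw [em]; exact hy⟩
      · exact Or.inr ⟨j', hj', by rw [ej j' hj1 hj2]; exact hy⟩
    · exact Or.inr ⟨m-1, by omega, by rw [em1]; exact List.mem_cons_self⟩

lemma push_pack (v : Valid t n c) (ht : 0 < t) (hl : legal t c t = true) :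
    ∃ x r, c.input = x :: r ∧ canPush x (S c (t-1)) = true ∧
      (applyMove t c t).input = r ∧ (applyMove t c t).output = c.output ∧
      S (applyMove t c t) (t-1) = x :: S c (t-1) ∧
      (∀ j, j ≠ t-1 → S (applyMove t c t) j = S c j) ∧
      Valid t n (applyMove t c t) ∧
      (∀ j y, Below (applyMove t c t) j y ↔ Below c j y ∨ (y = x ∧ t-1 < j)) := by
  obtain ⟨x, r, hI, hcp⟩ := (legalt_iff ht).1 hl
  have ht1len : t - 1 < c.stks.length := by rw [v.len]; omega
  have hA := applyt_eq ht hI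
  have ei : (applyMove t c t).input = r := by rw [hA]
  have eo : (applyMove t c t).output = c.output := by rw [hA]
  have et1 : S (applyMove t c t) (t-1) = x :: S c (t-1) := by
    rw [hA]
    exact getD_set_self _ _ _ ht1len
  have ej : ∀ j, j ≠ t-1 → S (applyMove t c t) j = S c j := by
    intro j hj
    rw [hA]
    exact getD_set_ne _ _ (fun h => hj h.symm)
  have hstt1 : c.stks[t-1]'ht1len = S c (t-1) := (S_eq c (t-1) ht1len).symm
  have hv : Valid t n (applyMove t c t) := by
    refine ⟨?_, ?_, ?_, ?_⟩
    · rw [hA]; simpa [List.length_set] using v.len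
    · rw [eo]; exact v.out
    · intro j
      rcases eq_or_ne j (t-1) with rfl | hj
      · rw [et1]; show List.IsChain _ _; rw [List.isChain_cons]
        exact ⟨canPush_iff.1 hcp, v.sorted (t-1)⟩
      · rw [ej j hj]; exact v.sorted j
    · rw [hA]
      refine List.perm_iff_count.2 fun y => ?_
      have h1 := (flatten_set_perm c.stks (t-1) (x :: S c (t-1)) ht1len).count_eq y
      have h3 := v.perm.count_eq y
      rw [hstt1] at h1
      rw [hI] at h3
      rcases eq_or_ne y x with rfl | hxy
      · simp only [List.count_append, List.count_cons, List.count_nil, if_pos rfl] at h1 h3 ⊢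
        omega
      · simp only [List.count_append, List.count_cons, List.count_nil, if_neg hxy] at h1 h3 ⊢
        omega
  refine ⟨x, r, hI, hcp, ei, eo, et1, ej, hv, fun j y => ?_⟩
  constructor
  · rintro (hy | ⟨j', hj', hy⟩)
    · rw [eo] at hy; exact Or.inl (Or.inl hy)
    · rcases eq_or_ne j' (t-1) with rfl | hj1
      · rw [et1] at hy
        rcases List.mem_cons.1 hy with rfl | hy
        · exact Or.inr ⟨rfl, hj'⟩
        · exact Or.inl (Or.inr ⟨t-1, hj', hy⟩)
      · rw [ej j' hj1] at hy
        exact Or.inl (Or.inr ⟨j', hj', hy⟩)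
  · rintro ((hy | ⟨j', hj', hy⟩) | ⟨rfl, hmj⟩)
    · exact Or.inl (by rw [eo]; exact hy)
    · rcases eq_or_ne j' (t-1) with rfl | hj1
      · exact Or.inr ⟨t-1, hj', by rw [et1]; exact List.mem_cons_of_mem _ hy⟩
      · exact Or.inr ⟨j', hj', by rw [ej j' hj1]; exact hy⟩
    · exact Or.inr ⟨t-1, hmj, by rw [et1]; exact List.mem_cons_self⟩

end Moves

/-! #### properties of the greedy move selectors -/

lemma sorted_head_min {l : List ℕ} {m : ℕ} (hl : l.Pairwise (· < ·)) (h : l.head? = some m) :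
    ∀ k ∈ l, m ≤ k := by
  cases l with
  | nil => simp at h
  | cons a as =>
    cases h
    intro k hk
    rcases List.mem_cons.1 hk with rfl | hk
    · exact le_refl _
    · exact le_of_lt (List.rel_of_pairwise_cons hl hk)

lemma mem_of_getLast?' {l : List ℕ} {a : ℕ} (h : l.getLast? = some a) : a ∈ l := by
  rw [List.getLast?_eq_head?_reverse] at h
  exact List.mem_reverse.1 (List.mem_of_mem_head? (Option.mem_def.2 h))

lemma sorted_getLast_max {l : List ℕ} {m : ℕ} (hl : l.Pairwise (· < ·))
    (h : l.getLast? = some m) : ∀ k ∈ l, k ≤ m := by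
  induction l with
  | nil => simp at h
  | cons a as ih =>
    cases as with
    | nil =>
      simp only [List.getLast?_singleton, Option.some.injEq] at h
      cases h
      intro k hk
      rcases List.mem_cons.1 hk with rfl | hk
      · exact le_refl _
      · simp at hk
    | cons b bs =>
      rw [List.getLast?_cons_cons] at h
      intro k hk
      have hmem : m ∈ b :: bs := mem_of_getLast?' h
      rcases List.mem_cons.1 hk with rfl | hk
      · exact le_of_lt (List.rel_of_pairwise_cons hl hmem)
      · exact ih hl.of_cons h k hk

lemma filterF_pairwise (t : ℕ) (c : Conf) :
    (((List.range (t+1)).filter (fun m => legal t c m))).Pairwise (· < ·) :=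
  (List.pairwise_lt_range).filter _

lemma rightMove_spec {t : ℕ} {c : Conf} {m : ℕ} (h : rightMove t c = some m) :
    m ≤ t ∧ legal t c m = true ∧ ∀ k, k ≤ t → legal t c k = true → k ≤ m := by
  have hmem := mem_of_getLast?' h
  rw [List.mem_filter, List.mem_range] at hmem
  refine ⟨by omega, hmem.2, fun k hk hleg => ?_⟩
  exact sorted_getLast_max (filterF_pairwise t c) h k
    (List.mem_filter.2 ⟨List.mem_range.2 (by omega), hleg⟩)

lemma rightMove_none {t : ℕ} {c : Conf} (h : rightMove t c = none) :
    ∀ k, k ≤ t → legal t c k = false := by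
  rw [rightMove, List.getLast?_eq_none_iff] at h
  intro k hk
  by_contra hleg
  have : legal t c k = true := by revert hleg; cases legal t c k <;> simp
  have : k ∈ ((List.range (t+1)).filter (fun m => legal t c m)) :=
    List.mem_filter.2 ⟨List.mem_range.2 (by omega), this⟩
  rw [h] at this
  simp at this

lemma leftMove_spec {t : ℕ} {c : Conf} {m : ℕ} (h : leftMove t c = some m) :
    m ≤ t ∧ legal t c m = true ∧ ∀ k, k ≤ t → legal t c k = true → m ≤ k := by
  have hmem := List.mem_of_mem_head? h
  rw [List.mem_filter, List.mem_range] at hmem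
  refine ⟨by omega, hmem.2, fun k hk hleg => ?_⟩
  exact sorted_head_min (filterF_pairwise t c) h k
    (List.mem_filter.2 ⟨List.mem_range.2 (by omega), hleg⟩)

lemma leftMove_none {t : ℕ} {c : Conf} (h : leftMove t c = none) :
    ∀ k, k ≤ t → legal t c k = false := by
  rw [leftMove, List.head?_eq_none_iff] at h
  intro k hk
  by_contra hleg
  have : legal t c k = true := by revert hleg; cases legal t c k <;> simp
  have : k ∈ ((List.range (t+1)).filter (fun m => legal t c m)) :=
    List.mem_filter.2 ⟨List.mem_range.2 (by omega), this⟩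
  rw [h] at this
  simp at this

lemma leftMove_push {t : ℕ} {c : Conf} (hs : StableL t c) (hl : legal t c t = true) :
    leftMove t c = some t := by
  rw [leftMove]
  have : (List.range (t+1)).filter (fun m => legal t c m) = [t] := by
    rw [List.range_succ, List.filter_append]
    have h1 : (List.range t).filter (fun m => legal t c m) = [] := by
      rw [List.filter_eq_nil_iff]
      intro a ha
      rw [hs a (List.mem_range.1 ha)]
      simp
    rw [h1, List.nil_append]
    simp [hl]
  rw [this]
  rfl

lemma greedyStep_some {mv : ℕ → Conf → Option ℕ} {t : ℕ} {c : Conf} {m : ℕ}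
    (h : mv t c = some m) : greedyStep mv t c = applyMove t c m := by
  rw [greedyStep, h]

lemma greedyStep_none {mv : ℕ → Conf → Option ℕ} {t : ℕ} {c : Conf}
    (h : mv t c = none) : greedyStep mv t c = c := by
  rw [greedyStep, h]

/-! #### the measure and stabilization -/

/-- Weighted total size of the stacks; decreases by `1` at each non-push move. -/
def mu (t : ℕ) (c : Conf) : ℕ := ∑ j ∈ Finset.range t, (j+1) * (S c j).length

lemma mu_lb {t : ℕ} {c : Conf} {j : ℕ} (hj : j < t) :
    (j+1) * (S c j).length ≤ mu t c := by
  rw [mu]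
  exact Finset.single_le_sum (f := fun j => (j+1) * (S c j).length)
    (fun i _ => Nat.zero_le _) (Finset.mem_range.2 hj)

lemma mu_pop {t : ℕ} {c c' : Conf} {x : ℕ} {s : List ℕ} (ht : 0 < t)
    (hS : S c 0 = x :: s) (e0 : S c' 0 = s) (ej : ∀ j, j ≠ 0 → S c' j = S c j) :
    mu t c' + 1 = mu t c := by
  have h0 : (0:ℕ) ∈ Finset.range t := Finset.mem_range.2 ht
  rw [mu, mu, ← Finset.add_sum_erase _ _ h0, ← Finset.add_sum_erase _ _ h0]
  have he : ∑ j ∈ (Finset.range t).erase 0, (j+1) * (S c' j).length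
      = ∑ j ∈ (Finset.range t).erase 0, (j+1) * (S c j).length :=
    Finset.sum_congr rfl (fun j hj => by rw [ej j (Finset.ne_of_mem_erase hj)])
  rw [he, e0, hS]
  simp [List.length_cons]
  omega

lemma mu_mid {t m : ℕ} {c c' : Conf} {x : ℕ} {s : List ℕ} (h0 : 0 < m) (htm : m < t)
    (hS : S c m = x :: s) (em1 : S c' (m-1) = x :: S c (m-1)) (em : S c' m = s)
    (ej : ∀ j, j ≠ m-1 → j ≠ m → S c' j = S c j) :
    mu t c' + 1 = mu t c := by
  have hm : m ∈ Finset.range t := Finset.mem_range.2 htm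
  have hm1 : m - 1 ∈ (Finset.range t).erase m :=
    Finset.mem_erase.2 ⟨by omega, Finset.mem_range.2 (by omega)⟩
  rw [mu, mu, ← Finset.add_sum_erase _ _ hm, ← Finset.add_sum_erase _ _ hm,
    ← Finset.add_sum_erase _ _ hm1, ← Finset.add_sum_erase _ _ hm1]
  have he : ∑ j ∈ ((Finset.range t).erase m).erase (m-1), (j+1) * (S c' j).length
      = ∑ j ∈ ((Finset.range t).erase m).erase (m-1), (j+1) * (S c j).length := by
    refine Finset.sum_congr rfl (fun j hj => ?_)
    have hj1 := Finset.ne_of_mem_erase hj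
    have hj2 := Finset.ne_of_mem_erase (Finset.mem_of_mem_erase hj)
    rw [ej j hj1 hj2]
  rw [he, em, em1, hS]
  have h1 : m - 1 + 1 = m := by omega
  rw [h1]
  simp only [List.length_cons, Nat.mul_succ]
  omega

lemma not_stable_exists {t : ℕ} {c : Conf} (h : ¬ StableL t c) :
    ∃ m, m < t ∧ legal t c m = true := by
  rw [StableL] at h
  push_neg at h
  obtain ⟨m, hm, hleg⟩ := h
  refine ⟨m, hm, ?_⟩
  revert hleg; cases legal t c m <;> simp

lemma stabilize {t n : ℕ} : ∀ (N : ℕ) (c : Conf), Valid t n c → mu t c ≤ N →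
    ∃ (s : ℕ) (c' : Conf), (greedyStep leftMove t)^[s] c = c' ∧ Valid t n c' ∧ StableL t c' ∧
      c'.input = c.input ∧ (∀ j y, Below c j y → Below c' j y) := by
  intro N
  induction N with
  | zero =>
    intro c v hmu
    by_cases hst : StableL t c
    · exact ⟨0, c, rfl, v, hst, rfl, fun _ _ h => h⟩
    · exfalso
      obtain ⟨m, hm, hleg⟩ := not_stable_exists hst
      have hne : S c m ≠ [] := by
        rcases eq_or_ne m 0 with rfl | hm0
        · obtain ⟨s, hS⟩ := legal0_iff.1 hleg
          rw [hS]; simp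
        · obtain ⟨x, s, hS, -⟩ := (legalm_iff (by omega) hm).1 hleg
          rw [hS]; simp
      have := mu_lb (c := c) hm
      have hpos : 0 < (S c m).length := List.length_pos_iff.2 hne
      have : 0 < mu t c := by
        have h1 : (m+1) * (S c m).length > 0 := by positivity
        omega
      omega
  | succ N ih =>
    intro c v hmu
    by_cases hst : StableL t c
    · exact ⟨0, c, rfl, v, hst, rfl, fun _ _ h => h⟩
    obtain ⟨m, hm, hleg⟩ := not_stable_exists hst
    cases hlm : leftMove t c with
    | none =>
      exact absurd hleg (by rw [leftMove_none hlm m (by omega)]; simp)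
    | some m₀ =>
      obtain ⟨hm₀t, hleg₀, hmin⟩ := leftMove_spec hlm
      have hm₀ : m₀ < t := lt_of_le_of_lt (hmin m (by omega) hleg) hm
      have hstep : greedyStep leftMove t c = applyMove t c m₀ := greedyStep_some hlm
      have ht0 : 0 < t := by omega
      rcases eq_or_ne m₀ 0 with rfl | hm₀0
      · obtain ⟨x, s, hS, -, ei, eo, e0, ej, v2, hbel⟩ := pop_pack v hleg₀
        have hmu2 : mu t (applyMove t c 0) + 1 = mu t c := mu_pop ht0 hS e0 ej
        obtain ⟨s', c', hit, v', hst', hinp', hbel'⟩ :=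
          ih (applyMove t c 0) v2 (by omega)
        refine ⟨s' + 1, c', ?_, v', hst', by rw [hinp', ei], fun j y hy => ?_⟩
        · rw [Function.iterate_succ_apply, hstep]; exact hit
        · exact hbel' j y ((hbel j y).2 (Or.inl hy))
      · obtain ⟨x, s, hS, -, ei, eo, em1, em, ej, v2, hbel⟩ :=
          mid_pack v (by omega) hm₀ hleg₀
        have hmu2 : mu t (applyMove t c m₀) + 1 = mu t c :=
          mu_mid (by omega) hm₀ hS em1 em ej
        obtain ⟨s', c', hit, v', hst', hinp', hbel'⟩ :=
          ih (applyMove t c m₀) v2 (by omega)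
        refine ⟨s' + 1, c', ?_, v', hst', by rw [hinp', ei], fun j y hy => ?_⟩
        · rw [Function.iterate_succ_apply, hstep]; exact hit
        · exact hbel' j y ((hbel j y).2 (Or.inl hy))

/-! #### the key invariant-preservation lemmas -/

section Step

variable {t n : ℕ} {cl cr : Conf}

/-- A pop by the right-greedy algorithm preserves the invariant. -/
lemma inv_pop (I : Inv t n cl cr) (hl : legal t cr 0 = true) :
    Inv t n cl (applyMove t cr 0) := by
  obtain ⟨x, s, hS, hx, ei, eo, e0, ej, v2, hbel⟩ := pop_pack I.vr hl
  refine ⟨I.vl, v2, by rw [I.inp, ei], I.stab, fun j y hy => ?_⟩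
  rcases (hbel j y).1 hy with hy | hyx
  · exact I.pos j y hy
  have hxy2 := hyx.symm
  subst hxy2
  suffices hout : x ∈ cl.output from Or.inl hout
  have ht0 : 0 < t := I.vr.stack_pos 0 (by rw [hS]; simp)
  have hb1 : Below cl 1 x :=
    I.pos 1 x (Or.inr ⟨0, by omega, by rw [hS]; exact List.mem_cons_self⟩)
  rcases hb1 with hout | ⟨j', hj', hxin⟩
  · exact hout
  exfalso
  have hj'0 : j' = 0 := by omega
  subst hj'0
  have hxgt : cl.output.length < x := I.vl.out_lt_stk hxin
  have hkk : cr.output.length ≤ cl.output.length := by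
    rcases Nat.eq_zero_or_pos cr.output.length with h0 | hpos
    · omega
    · have hmem : cr.output.length ∈ cr.output := I.vr.mem_out_iff.2 ⟨by omega, by omega⟩
      rcases I.pos 0 _ (Or.inl hmem) with h | ⟨j', hj', _⟩
      · have := (I.vl.mem_out_iff.1 h).2; omega
      · omega
  obtain ⟨h, l, hSL⟩ : ∃ h l, S cl 0 = h :: l := by
    cases hSL : S cl 0 with
    | nil => rw [hSL] at hxin; simp at hxin
    | cons h l => exact ⟨h, l, rfl⟩
  have hhx : h ≤ x := I.vl.head_le_of_mem hSL hxin
  have hh_in : h ∈ S cl 0 := by rw [hSL]; exact List.mem_cons_self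
  have hhgt : cl.output.length < h := I.vl.out_lt_stk hh_in
  have hleg : legal t cl 0 = true := legal0_iff.2 ⟨l, by rw [hSL]; congr 1; omega⟩
  rw [I.stab 0 ht0] at hleg
  simp at hleg

/-- A stack-to-stack move by the right-greedy algorithm preserves the invariant. -/
lemma inv_mid {m : ℕ} (I : Inv t n cl cr) (h0 : 0 < m) (htm : m < t)
    (hl : legal t cr m = true)
    (hblock : ∀ m', m < m' → m' < t → legal t cr m' = false) :
    Inv t n cl (applyMove t cr m) := by
  obtain ⟨x, s, hS, hcp, ei, eo, em1, em, ej, v2, hbel⟩ := mid_pack I.vr h0 htm hl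
  refine ⟨I.vl, v2, by rw [I.inp, ei], I.stab, fun j y hy => ?_⟩
  rcases (hbel j y).1 hy with hy | ⟨hyx, hmj⟩
  · exact I.pos j y hy
  have hxy2 := hyx.symm
  subst hxy2
  suffices hbm : Below cl m x from below_mono hmj hbm
  by_contra hnb
  have hbm1 : Below cl (m+1) x :=
    I.pos (m+1) x (Or.inr ⟨m, by omega, by rw [hS]; exact List.mem_cons_self⟩)
  have hxin : x ∈ S cl m := by
    rcases hbm1 with h | ⟨j', hj', hin⟩
    · exact absurd (Or.inl h) hnb
    · rcases eq_or_ne j' m with rfl | hne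
      · exact hin
      · exact absurd (Or.inr ⟨j', by omega, hin⟩) hnb
  have claim1 : ∀ i, m ≤ i → i < t → ∀ z ∈ S cr i, x ≤ z := by
    intro i
    induction i with
    | zero => intro h1 _ _ _; omega
    | succ i ih =>
      intro h1 h2 z hz
      rcases eq_or_ne m (i+1) with heq | hne
      · subst heq; exact I.vr.head_le_of_mem hS hz
      · have hlegF := hblock (i+1) (by omega) h2
        obtain ⟨y₀, tl, hSi⟩ : ∃ y₀ tl, S cr (i+1) = y₀ :: tl := by
          cases hSi : S cr (i+1) with
          | nil => rw [hSi] at hz; simp at hz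
          | cons a l => exact ⟨a, l, rfl⟩
        have hncp : ¬ (canPush y₀ (S cr i) = true) := by
          intro hcp'
          rw [(legalm_iff (by omega) h2).2 ⟨y₀, tl, by simpa using hSi, by simpa using hcp'⟩]
            at hlegF
          simp at hlegF
        cases hSz : S cr i with
        | nil => rw [hSz] at hncp; simp [canPush] at hncp
        | cons z₀ tz =>
          rw [hSz] at hncp
          simp only [canPush, decide_eq_true_eq] at hncp
          have hz₀y₀ : z₀ ≤ y₀ := by omega
          have hxz₀ : x ≤ z₀ := ih (by omega) (by omega) z₀ (by rw [hSz]; exact List.mem_cons_self)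
          have hy₀z : y₀ ≤ z := I.vr.head_le_of_mem hSi hz
          omega
  obtain ⟨w₀, tl₀, hSm⟩ : ∃ a l, S cl m = a :: l := by
    cases hSm : S cl m with
    | nil => rw [hSm] at hxin; simp at hxin
    | cons a l => exact ⟨a, l, rfl⟩
  have hw₀x : w₀ ≤ x := I.vl.head_le_of_mem hSm hxin
  have hlegF := I.stab m htm
  have hncp : ¬ (canPush w₀ (S cl (m-1)) = true) := by
    intro hcp'
    rw [(legalm_iff h0 htm).2 ⟨w₀, tl₀, hSm, hcp'⟩] at hlegF
    simp at hlegF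
  cases hSm1 : S cl (m-1) with
  | nil => rw [hSm1] at hncp; simp [canPush] at hncp
  | cons w tw =>
  rw [hSm1] at hncp
  simp only [canPush, decide_eq_true_eq] at hncp
  have hww₀ : w ≤ w₀ := by omega
  have hwin : w ∈ S cl (m-1) := by rw [hSm1]; exact List.mem_cons_self
  have hwnex : w ≠ x := fun h => I.vl.u_stk_stk (by omega : m - 1 ≠ m) (h ▸ hwin) hxin
  have hwx : w < x := lt_of_le_of_ne (le_trans hww₀ hw₀x) hwnex
  have hnbw : ¬ Below cr (m-1) w :=
    fun hb => I.vl.not_below_of_mem_stack hwin (I.pos (m-1) w hb)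
  have hwnotinp : w ∉ cr.input := by
    rw [← I.inp]; exact fun h => I.vl.u_stk_inp hwin h
  have hwrange := I.vl.mem_range'_of_mem_stk hwin
  rcases I.vr.total hwrange with hout | hrest
  · exact hnbw (Or.inl hout)
  rcases hrest with ⟨i, hin⟩ | hinp
  · have hit : i < t := I.vr.stack_pos i (List.ne_nil_of_mem hin)
    have him1 : m - 1 ≤ i := by
      by_contra hh
      exact hnbw (Or.inr ⟨i, by omega, hin⟩)
    rcases eq_or_ne i (m-1) with rfl | hne
    · obtain ⟨z, tz, hSz⟩ : ∃ z tz, S cr (m-1) = z :: tz := by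
        cases hSz : S cr (m-1) with
        | nil => rw [hSz] at hin; simp at hin
        | cons a l => exact ⟨a, l, rfl⟩
      have hxz : x < z := by
        have := canPush_iff.1 hcp z
        rw [hSz] at this
        exact this rfl
      have hzw : z ≤ w := I.vr.head_le_of_mem hSz hin
      omega
    · have := claim1 i (by omega) hit w hin
      omega
  · exact absurd hinp hwnotinp

/-- When the right-greedy algorithm pushes, so can the left-greedy one, and the
pointwise-position invariant is preserved by the simultaneous pushes. -/
lemma push_step (I : Inv t n cl cr) (ht : 0 < t) (hl : legal t cr t = true) :
    legal t cl t = true ∧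
    (applyMove t cl t).input = (applyMove t cr t).input ∧
    Valid t n (applyMove t cl t) ∧ Valid t n (applyMove t cr t) ∧
    (∀ j y, Below (applyMove t cr t) j y → Below (applyMove t cl t) j y) := by
  obtain ⟨x, r, hIr, hcp, eir, eor, et1r, ejr, v2r, hbelr⟩ := push_pack I.vr ht hl
  have hIl : cl.input = x :: r := by rw [I.inp]; exact hIr
  have hcpl : canPush x (S cl (t-1)) = true := by
    cases hSL : S cl (t-1) with
    | nil => simp [canPush]
    | cons w tw =>
      have hwin : w ∈ S cl (t-1) := by rw [hSL]; exact List.mem_cons_self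
      have hnbw : ¬ Below cr (t-1) w :=
        fun hb => I.vl.not_below_of_mem_stack hwin (I.pos (t-1) w hb)
      have hwnotinp : w ∉ cr.input := by
        rw [← I.inp]; exact fun h => I.vl.u_stk_inp hwin h
      have hwrange := I.vl.mem_range'_of_mem_stk hwin
      have hxw : x < w := by
        rcases I.vr.total hwrange with hout | hrest
        · exact absurd (Or.inl hout) hnbw
        rcases hrest with ⟨i, hin⟩ | hinp
        · have hit : i < t := I.vr.stack_pos i (List.ne_nil_of_mem hin)
          have : i = t - 1 := by
            by_contra hh
            exact hnbw (Or.inr ⟨i, by omega, hin⟩)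
          subst this
          obtain ⟨z, tz, hSz⟩ : ∃ z tz, S cr (t-1) = z :: tz := by
            cases hSz : S cr (t-1) with
            | nil => rw [hSz] at hin; simp at hin
            | cons a l => exact ⟨a, l, rfl⟩
          have hxz : x < z := by
            have := canPush_iff.1 hcp z
            rw [hSz] at this
            exact this rfl
          have hzw : z ≤ w := I.vr.head_le_of_mem hSz hin
          omega
        · exact absurd hinp hwnotinp
      simp [canPush, hxw]
  have hlegl : legal t cl t = true := (legalt_iff ht).2 ⟨x, r, hIl, hcpl⟩
  obtain ⟨x', r', hIl', hcp', eil, eol, et1l, ejl, v2l, hbell⟩ := push_pack I.vl ht hlegl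
  rw [hIl] at hIl'
  injection hIl' with h1 h2
  subst h1; subst h2
  refine ⟨hlegl, by rw [eil, eir], v2l, v2r, fun j y hy => ?_⟩
  rcases (hbelr j y).1 hy with hy | ⟨rfl, hj⟩
  · exact (hbell j y).2 (Or.inl (I.pos j y hy))
  · exact (hbell j y).2 (Or.inr ⟨rfl, hj⟩)

/-- If the invariant relates `cl` to the final configuration, `cl` is final. -/
lemma final_extract (I : Inv t n cl (finalConf t n)) : cl = finalConf t n := by
  have hinp : cl.input = [] := by rw [I.inp]; rfl
  have hsub : List.range' 1 n ⊆ cl.output := by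
    intro x hx
    have hxf : x ∈ (finalConf t n).output := hx
    rcases I.pos 0 x (Or.inl hxf) with h | ⟨j', hj', _⟩
    · exact h
    · omega
  have hn : n ≤ cl.output.length := by
    have := (List.subperm_of_subset (List.nodup_range' (s := 1) (n := n) 1 (by norm_num)) hsub).length_le
    simpa using this
  have hlen : cl.output.length + cl.stks.flatten.length + cl.input.length = n := by
    have := I.vl.perm.length_eq
    simp only [List.length_append, List.length_range'] at this
    omega
  have hfl : cl.stks.flatten = [] := List.length_eq_zero_iff.1 (by omega)
  have hout : cl.output = List.range' 1 n := by
    rw [I.vl.out]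
    congr 1
    omega
  have hstks : cl.stks = List.replicate t [] := by
    refine List.eq_replicate_iff.2 ⟨I.vl.len, fun b hb => ?_⟩
    cases hbb : b with
    | nil => rfl
    | cons a l =>
      exfalso
      have : a ∈ cl.stks.flatten := List.mem_flatten.2 ⟨b, hb, by rw [hbb]; exact List.mem_cons_self⟩
      rw [hfl] at this
      simp at this
  cases cl with
  | mk i s o =>
    simp only [finalConf, Conf.mk.injEq]
    exact ⟨hinp, hstks, hout⟩

/-- Main induction along the right-greedy run. -/
lemma main_ind {t n : ℕ} : ∀ (k : ℕ) (cr cl : Conf), Inv t n cl cr →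
    (greedyStep rightMove t)^[k] cr = finalConf t n →
    ∃ k', (greedyStep leftMove t)^[k'] cl = finalConf t n := by
  intro k
  induction k with
  | zero =>
    intro cr cl I hfin
    rw [Function.iterate_zero_apply] at hfin
    subst hfin
    exact ⟨0, by rw [Function.iterate_zero_apply]; exact final_extract I⟩
  | succ k ih =>
    intro cr cl I hfin
    rw [Function.iterate_succ_apply] at hfin
    cases hrm : rightMove t cr with
    | none =>
      rw [greedyStep_none hrm] at hfin
      exact ih cr cl I hfin
    | some m =>
      rw [greedyStep_some hrm] at hfin
      obtain ⟨hmt, hleg, hmax⟩ := rightMove_spec hrm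
      rcases eq_or_ne m 0 with rfl | hm0
      · exact ih _ cl (inv_pop I hleg) hfin
      rcases lt_or_ge m t with hmlt | hmge
      · have hblock : ∀ m', m < m' → m' < t → legal t cr m' = false := by
          intro m' h1 h2
          by_contra hh
          have h3 : legal t cr m' = true := by revert hh; cases legal t cr m' <;> simp
          have := hmax m' (by omega) h3
          omega
        exact ih _ cl (inv_mid I (by omega) hmlt hleg hblock) hfin
      · have hmeq : m = t := by omega
        rw [hmeq] at hleg hfin
        have ht0 : 0 < t := by omega
        obtain ⟨hlegl, hinp2, vl2, vr2, hpos2⟩ := push_step I ht0 hleg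
        have hlml : leftMove t cl = some t := leftMove_push I.stab hlegl
        obtain ⟨s', cl', hit', v', hst', hinp', hbel'⟩ :=
          stabilize (mu t (applyMove t cl t)) (applyMove t cl t) vl2 (le_refl _)
        have I' : Inv t n cl' (applyMove t cr t) :=
          ⟨v', vr2, by rw [hinp']; exact hinp2, hst', fun j y hy => hbel' j y (hpos2 j y hy)⟩
        obtain ⟨k', hk'⟩ := ih _ cl' I' hfin
        refine ⟨k' + (s' + 1), ?_⟩
        rw [Function.iterate_add_apply, Function.iterate_succ_apply,
          greedyStep_some hlml, hit', hk']

end Step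

/-! #### the initial configuration -/

lemma flatten_replicate_nil (t : ℕ) : (List.replicate t ([] : List ℕ)).flatten = [] := by
  induction t with
  | zero => rfl
  | succ t ih => simp [List.replicate_succ, ih]

lemma valid_init {t n : ℕ} {p : List ℕ} (hp : p.Perm (List.range' 1 n)) :
    Valid t n (initConf t p) := by
  have hSj : ∀ j, S (initConf t p) j = [] := by
    intro j
    rcases lt_or_ge j t with hj | hj
    · rw [S_eq _ j (by simpa [initConf] using hj)]
      simp [initConf]
    · exact S_default _ j (by simpa [initConf] using hj)
  refine ⟨by simp [initConf], by simp [initConf], fun j => by rw [hSj j]; exact List.isChain_nil, ?_⟩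
  simpa [initConf, flatten_replicate_nil] using hp

lemma stable_init {t : ℕ} {p : List ℕ} : StableL t (initConf t p) := by
  intro m hm
  have hSj : ∀ j, S (initConf t p) j = [] := by
    intro j
    rcases lt_or_ge j t with hj | hj
    · rw [S_eq _ j (by simpa [initConf] using hj)]
      simp [initConf]
    · exact S_default _ j (by simpa [initConf] using hj)
  by_contra hh
  have hleg : legal t (initConf t p) m = true := by revert hh; cases legal t (initConf t p) m <;> simp
  rcases eq_or_ne m 0 with rfl | hm0
  · obtain ⟨s, hS⟩ := legal0_iff.1 hleg
    rw [hSj 0] at hS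
    simp at hS
  · obtain ⟨x, s, hS, -⟩ := (legalm_iff (by omega) hm).1 hleg
    rw [hSj m] at hS
    simp at hS

end StacksAux

/-- Every permutation sorted by the right-greedy algorithm on `t` stacks in series
is also sorted by the left-greedy algorithm on `t` stacks in series. -/
theorem stmt3 (t n : ℕ) (p : List ℕ) (hp : IsPermOf n p)
    (h : RightGreedySorts t p) : LeftGreedySorts t p := by
  obtain ⟨k, hk⟩ := h
  have hlen : p.length = n := by simpa using hp.length_eq
  rw [hlen] at hk
  have vinit : StacksAux.Valid t n (initConf t p) := StacksAux.valid_init hp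
  have I : StacksAux.Inv t n (initConf t p) (initConf t p) :=
    ⟨vinit, vinit, rfl, StacksAux.stable_init, fun _ _ h => h⟩
  obtain ⟨k', hk'⟩ := StacksAux.main_ind k (initConf t p) (initConf t p) I hk
  exact ⟨k', by rw [hlen]; exact hk'⟩
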